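/- There is an absolute constant A > 0 such that for all real x and all real y ≥ 0 with (x, y) ≠ (0, 0), one has | ( sin(x + iy)/(x + iy) )² − ( sin x / x )² | ≤ A·y·e^{2y}/(1 + x² + y²), where sin(z)/z is interpreted as 1 at z = 0. -/

import Mathlib

open Complex Real Set

/-- The complex Fejér factor `(sin z / z)²`, interpreted as `1` at `z = 0`. -/
noncomputable def fejerC (z : ℂ) : ℂ := by
  classical
  exact if z = 0 then 1 else (Complex.sin z / z) ^ 2

lemma fejerC_eq : fejerC = fun z => (dslope Complex.sin 0 z) ^ 2 := by
  funext z
  by_cases hz : z = 0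
  · subst hz
    simp [fejerC, dslope_same, Complex.deriv_sin]
  · simp [fejerC, hz, dslope_of_ne _ hz, slope_def_field]

lemma fejerC_diff : Differentiable ℂ fejerC := by
  rw [fejerC_eq]
  have h : DifferentiableOn ℂ (dslope Complex.sin 0) univ := by
    rw [Complex.differentiableOn_dslope (by simp)]
    exact Complex.differentiable_sin.differentiableOn
  exact (differentiableOn_univ.mp h).pow 2

lemma abs_sin_le' {z : ℂ} (h : 0 ≤ z.im) : ‖Complex.sin z‖ ≤ Real.exp z.im := by
  rw [Complex.sin]
  have h1 : ‖Complex.exp (-z * I)‖ = Real.exp z.im := by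
    rw [Complex.norm_exp]; congr 1; simp
  have h2 : ‖Complex.exp (z * I)‖ = Real.exp (-z.im) := by
    rw [Complex.norm_exp]; congr 1; simp
  calc ‖(Complex.exp (-z * I) - Complex.exp (z * I)) * I / 2‖
      = (‖Complex.exp (-z * I) - Complex.exp (z * I)‖) / 2 := by
        rw [norm_div, norm_mul]; simp
    _ ≤ (Real.exp z.im + Real.exp (-z.im)) / 2 := by
        gcongr
        refine (norm_sub_le _ _).trans ?_
        rw [h1, h2]
    _ ≤ Real.exp z.im := by
        have : Real.exp (-z.im) ≤ Real.exp z.im := Real.exp_le_exp.2 (by linarith)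
        linarith

lemma abs_cos_le' {z : ℂ} (h : 0 ≤ z.im) : ‖Complex.cos z‖ ≤ Real.exp z.im := by
  rw [Complex.cos]
  have h1 : ‖Complex.exp (-z * I)‖ = Real.exp z.im := by
    rw [Complex.norm_exp]; congr 1; simp
  have h2 : ‖Complex.exp (z * I)‖ = Real.exp (-z.im) := by
    rw [Complex.norm_exp]; congr 1; simp
  calc ‖(Complex.exp (z * I) + Complex.exp (-z * I)) / 2‖
      = (‖Complex.exp (z * I) + Complex.exp (-z * I)‖) / 2 := by
        rw [norm_div]; simp
    _ ≤ (Real.exp (-z.im) + Real.exp z.im) / 2 := by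
        gcongr
        refine (norm_add_le _ _).trans ?_
        rw [h1, h2]
    _ ≤ Real.exp z.im := by
        have : Real.exp (-z.im) ≤ Real.exp z.im := Real.exp_le_exp.2 (by linarith)
        linarith

lemma deriv_fejerC_eq {z : ℂ} (hz : z ≠ 0) :
    deriv fejerC z
      = 2 * (Complex.sin z / z) ^ 1 * ((Complex.cos z * z - Complex.sin z * 1) / z ^ 2) := by
  have hd : HasDerivAt (fun w => (Complex.sin w / w) ^ 2)
      (2 * (Complex.sin z / z) ^ 1 * ((Complex.cos z * z - Complex.sin z * 1) / z ^ 2)) z := by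
    exact (((Complex.hasDerivAt_sin z).div (hasDerivAt_id z) hz)).pow 2
  have heq : fejerC =ᶠ[nhds z] fun w => (Complex.sin w / w) ^ 2 := by
    filter_upwards [isOpen_compl_singleton.mem_nhds hz] with w hw
    simp only [Set.mem_compl_iff, Set.mem_singleton_iff] at hw
    simp [fejerC, hw]
  rw [heq.deriv_eq, hd.deriv]

lemma deriv_fejerC_far {x t : ℝ} (ht : 0 ≤ t) (h1 : 1 ≤ x ^ 2 + t ^ 2) :
    ‖deriv fejerC ((x : ℂ) + t * I)‖ ≤ 8 * Real.exp (2 * t) / (1 + x ^ 2 + t ^ 2) := by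
  set z : ℂ := (x : ℂ) + t * I with hzdef
  have him : z.im = t := by simp [hzdef]
  have hre : z.re = x := by simp [hzdef]
  set r := ‖z‖ with hrdef
  have habs2 : r ^ 2 = x ^ 2 + t ^ 2 := by
    rw [hrdef, Complex.sq_norm, Complex.normSq_apply, hre, him]; ring
  have hr1 : 1 ≤ r := by nlinarith [norm_nonneg z]
  have hr0 : (0:ℝ) < r := by linarith
  have hz : z ≠ 0 := by
    intro h; rw [h] at hrdef; simp [hrdef] at hr1; linarith
  have hs : ‖Complex.sin z‖ ≤ Real.exp t := by
    have := abs_sin_le' (z := z) (by rw [him]; exact ht); rwa [him] at this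
  have hc : ‖Complex.cos z‖ ≤ Real.exp t := by
    have := abs_cos_le' (z := z) (by rw [him]; exact ht); rwa [him] at this
  have hB : ‖Complex.cos z * z - Complex.sin z * 1‖ ≤ 2 * Real.exp t * r := by
    refine (norm_sub_le _ _).trans ?_
    rw [norm_mul, norm_mul, norm_one, mul_one]
    nlinarith [Real.exp_pos t, norm_nonneg (Complex.sin z)]
  rw [deriv_fejerC_eq hz]
  have hexpand : ‖2 * (Complex.sin z / z) ^ 1 * ((Complex.cos z * z - Complex.sin z * 1) / z ^ 2)‖
      = 2 * ‖Complex.sin z‖ * ‖Complex.cos z * z - Complex.sin z * 1‖ / r ^ 3 := by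
    rw [norm_mul, norm_mul, norm_pow, norm_div, norm_div, norm_pow]
    rw [Complex.norm_two, ← hrdef, pow_one]
    generalize ‖Complex.sin z‖ = A
    generalize ‖Complex.cos z * z - Complex.sin z * 1‖ = B
    rw [← mul_div_assoc]
    ring
  rw [hexpand]
  rw [div_le_div_iff₀ (by positivity) (by linarith)]
  have hE : Real.exp (2 * t) = Real.exp t * Real.exp t := by
    rw [← Real.exp_add]; ring_nf
  rw [hE]
  have h2 : 1 + x ^ 2 + t ^ 2 ≤ 2 * r ^ 2 := by nlinarith
  have key : ‖Complex.sin z‖ * ‖Complex.cos z * z - Complex.sin z * 1‖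
      * (1 + x ^ 2 + t ^ 2) ≤ (Real.exp t * (2 * Real.exp t * r)) * (2 * r ^ 2) := by
    refine mul_le_mul ?_ h2 (by positivity) (by positivity)
    exact mul_le_mul hs hB (norm_nonneg _) (Real.exp_pos t).le
  nlinarith [key]

lemma one_add_sq_le_exp {s : ℝ} (hs : 0 ≤ s) : 1 + s ^ 2 ≤ Real.exp (2 * s) := by
  have h1 : 1 + s ≤ Real.exp s := by linarith [Real.add_one_le_exp s]
  have h2 : Real.exp (2 * s) = Real.exp s * Real.exp s := by rw [← Real.exp_add]; ring_nf
  nlinarith [Real.exp_pos s]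

lemma compare_ineq {x t y : ℝ} (ht : 0 ≤ t) (hty : t ≤ y) :
    Real.exp (2 * t) * (1 + x ^ 2 + y ^ 2)
      ≤ 2 * Real.exp (2 * y) * (1 + x ^ 2 + t ^ 2) := by
  have hs : 0 ≤ y - t := by linarith
  have h1 : 1 + (y - t) ^ 2 ≤ Real.exp (2 * (y - t)) := one_add_sq_le_exp hs
  have h2 : 1 + x ^ 2 + y ^ 2 ≤ 2 * (1 + x ^ 2 + t ^ 2) * (1 + (y - t) ^ 2) := by
    nlinarith [sq_nonneg (y - t), sq_nonneg x, sq_nonneg t, sq_nonneg (y - 2*t)]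
  have h3 : Real.exp (2 * t) * Real.exp (2 * (y - t)) = Real.exp (2 * y) := by
    rw [← Real.exp_add]; ring_nf
  calc Real.exp (2 * t) * (1 + x ^ 2 + y ^ 2)
      ≤ Real.exp (2 * t) * (2 * (1 + x ^ 2 + t ^ 2) * (1 + (y - t) ^ 2)) := by
        exact mul_le_mul_of_nonneg_left h2 (Real.exp_pos _).le
    _ ≤ Real.exp (2 * t) * (2 * (1 + x ^ 2 + t ^ 2) * Real.exp (2 * (y - t))) := by
        have hp : (0:ℝ) ≤ 2 * (1 + x ^ 2 + t ^ 2) := by positivity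
        exact mul_le_mul_of_nonneg_left (mul_le_mul_of_nonneg_left h1 hp) (Real.exp_pos _).le
    _ = 2 * Real.exp (2 * y) * (1 + x ^ 2 + t ^ 2) := by
        rw [← h3]; ring

/-- Selberg's bound on the vertical variation of the Fejér kernel:
`|(sin(x+iy)/(x+iy))² - (sin x / x)²| ≪ y e^{2y} / (1 + x² + y²)`. -/
theorem fejer_kernel_vertical_variation :
    ∃ A > (0 : ℝ), ∀ x y : ℝ, 0 ≤ y → (x, y) ≠ (0, 0) →
      ‖fejerC ((x : ℂ) + y * Complex.I) - fejerC (x : ℂ)‖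
        ≤ A * y * Real.exp (2 * y) / (1 + x ^ 2 + y ^ 2) := by
  -- bound the derivative near zero by compactness
  have hcont : Continuous (deriv fejerC) :=
    (fejerC_diff.contDiff (n := 2)).continuous_deriv (by norm_num)
  obtain ⟨M, hM⟩ := (isCompact_closedBall (0:ℂ) 1).exists_bound_of_continuousOn
    hcont.continuousOn
  set M' := max M 0 with hM'def
  have hM'0 : 0 ≤ M' := le_max_right _ _
  set A : ℝ := 2 * M' + 16 with hAdef
  refine ⟨A, by positivity, fun x y hy _ => ?_⟩
  set D : ℝ := 1 + x ^ 2 + y ^ 2 with hDdef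
  have hD0 : 0 < D := by positivity
  set E : ℝ := Real.exp (2 * y) with hEdef
  have hE0 : 0 < E := Real.exp_pos _
  -- the uniform derivative bound along the segment
  have hbound : ∀ t ∈ Set.Ico (0:ℝ) y,
      ‖I • deriv fejerC ((x : ℂ) + t * I)‖ ≤ A * (E / D) := by
    intro t htm
    obtain ⟨ht0, hty⟩ := htm
    have hty' : t ≤ y := hty.le
    have hnorm : ‖I • deriv fejerC ((x : ℂ) + t * I)‖
        = ‖deriv fejerC ((x : ℂ) + t * I)‖ := by
      rw [norm_smul, Complex.norm_I, one_mul]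
    rw [hnorm]
    by_cases hc : x ^ 2 + t ^ 2 ≤ 1
    · -- near zero: use the compactness bound
      have hmem : (x : ℂ) + t * I ∈ Metric.closedBall (0:ℂ) 1 := by
        rw [Metric.mem_closedBall, dist_zero_right]
        have : (‖(x:ℂ) + t * I‖) ^ 2 = x ^ 2 + t ^ 2 := by
          rw [Complex.sq_norm, Complex.normSq_apply]; simp; ring
        nlinarith [norm_nonneg ((x:ℂ) + t * I)]
      have h1 : ‖deriv fejerC ((x:ℂ) + t * I)‖ ≤ M' := by
        refine le_trans ?_ (le_max_left M 0)
        simpa using hM _ hmem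
      have hhalf : (1:ℝ) / 2 ≤ E / D := by
        rw [div_le_div_iff₀ (by norm_num) hD0, hDdef, hEdef]
        have hx1 : x ^ 2 ≤ 1 := by nlinarith
        nlinarith [one_add_sq_le_exp hy]
      calc ‖deriv fejerC ((x:ℂ) + t * I)‖ ≤ M' := h1
        _ = (2 * M') * (1/2) := by ring
        _ ≤ A * (E / D) := by
            refine mul_le_mul (by rw [hAdef]; linarith) hhalf (by norm_num) (by positivity)
    · -- far from zero
      push_neg at hc
      have h1 := deriv_fejerC_far (x := x) (t := t) ht0 hc.le
      refine h1.trans ?_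
      have hcmp := compare_ineq (x := x) ht0 hty'
      have hA16 : (16:ℝ) ≤ A := by rw [hAdef]; linarith
      calc (8:ℝ) * Real.exp (2*t) / (1 + x ^ 2 + t ^ 2)
          ≤ 16 * E / D := by
            rw [div_le_div_iff₀ (by positivity) hD0, hDdef, hEdef]
            nlinarith [hcmp]
        _ ≤ A * (E / D) := by
            rw [mul_div_assoc]
            exact mul_le_mul_of_nonneg_right hA16 (by positivity)
  -- mean value inequality along the vertical segment
  have hderivs : ∀ t ∈ Set.Icc (0:ℝ) y,
      HasDerivWithinAt (fun s : ℝ => fejerC ((x : ℂ) + s * I))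
        (I • deriv fejerC ((x : ℂ) + t * I)) (Set.Icc 0 y) t := by
    intro t _
    have hg : HasDerivAt (fun s : ℝ => ((x : ℂ) + s * I)) I t := by
      have h1 : HasDerivAt (fun s : ℝ => (s : ℂ)) 1 t := by
        simpa using (hasDerivAt_id t).ofReal_comp
      simpa using (h1.mul_const I).const_add (x : ℂ)
    have hF : HasDerivAt fejerC (deriv fejerC ((x : ℂ) + t * I)) ((x : ℂ) + t * I) :=
      (fejerC_diff _).hasDerivAt
    exact (HasDerivAt.scomp t hF hg).hasDerivWithinAt
  have hmv := norm_image_sub_le_of_norm_deriv_le_segment' hderivs hbound y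
    (Set.right_mem_Icc.2 hy)
  have h0 : fejerC ((x : ℂ) + (0:ℝ) * I) = fejerC (x : ℂ) := by norm_num
  rw [h0] at hmv
  calc ‖fejerC ((x : ℂ) + y * I) - fejerC (x : ℂ)‖
      ≤ A * (E / D) * (y - 0) := hmv
    _ = A * y * E / D := by ring
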